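/- Let b ≥ 2 be an integer and let N satisfy b^{n−1} ≤ N ≤ b^n − 1. Let ν_N = (1/N)∑_{k=1}^{N} δ_{⟨log_b k⟩} be the empirical measure of fractional parts of base-b logarithms. Then for i with b^{n−1} ≤ i ≤ N−1 and t ∈ [log_b i − n + 1, log_b(i+1) − n + 1), the distribution function satisfies ν_N([0,t]) = (n + ∑_{j=0}^{n−1}(⌊i·b^{−j}⌋ − b^{n−1−j}))/N. -/

import Mathlib

open MeasureTheory

/-- Empirical measure of the fractional parts of the base-`b` logarithms of `1,…,N`. -/
noncomputable def empLog (b N : ℕ) : Measure ℝ :=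
  (N : ENNReal)⁻¹ • ∑ k ∈ Finset.Icc 1 N, Measure.dirac (Int.fract (Real.logb b k))

theorem stmt11 (b n N i : ℕ) (hb : 2 ≤ b)
    (hN1 : b ^ (n - 1) ≤ N) (hN2 : N ≤ b ^ n - 1)
    (hi1 : b ^ (n - 1) ≤ i) (hi2 : i ≤ N - 1)
    (t : ℝ) (ht1 : Real.logb b i - n + 1 ≤ t) (ht2 : t < Real.logb b (i + 1) - n + 1) :
    (empLog b N) (Set.Icc 0 t) =
      ENNReal.ofReal (((n : ℝ) + ∑ j ∈ Finset.range n,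
        (((i / b ^ j : ℕ) : ℝ) - ((b ^ (n - 1 - j) : ℕ) : ℝ))) / (N : ℝ)) := by
  classical
  have hb0 : 0 < b := by omega
  have hbR : (1:ℝ) < b := by exact_mod_cast hb
  have hbR0 : (0:ℝ) < b := by linarith
  have hn : 1 ≤ n := by
    rcases Nat.eq_zero_or_pos n with h | h
    · subst h; simp at hN1 hN2; omega
    · exact h
  have hN0 : 0 < N := lt_of_lt_of_le (Nat.pow_pos hb0) hN1
  have hi0 : 0 < i := lt_of_lt_of_le (Nat.pow_pos hb0) hi1
  have hiN : i < N := by omega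
  have hbn2 : 2 ≤ b ^ n := by
    calc 2 ≤ b := hb
    _ = b ^ 1 := (pow_one b).symm
    _ ≤ b ^ n := Nat.pow_le_pow_right (by omega) hn
  have hibn : i < b ^ n := by omega
  -- key real bounds on b ^ (t + n - 1)
  have hkey1 : (i:ℝ) ≤ (b:ℝ) ^ (t + (n:ℝ) - 1) := by
    rw [← Real.logb_le_iff_le_rpow hbR (by exact_mod_cast hi0)]
    linarith
  have hkey2 : (b:ℝ) ^ (t + (n:ℝ) - 1) < (i:ℝ) + 1 := by
    rw [← Real.lt_logb_iff_rpow_lt hbR (by positivity)]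
    linarith
  -- membership characterization
  have hmem : ∀ k ∈ Finset.Icc 1 N,
      (Int.fract (Real.logb b k) ∈ Set.Icc 0 t ↔ k * b ^ (n - 1 - Nat.log b k) ≤ i) := by
    intro k hk
    rw [Finset.mem_Icc] at hk
    set m := Nat.log b k with hm
    have hk0 : 0 < k := hk.1
    have hkR : (0:ℝ) < k := by exact_mod_cast hk0
    have hbm : b ^ m ≤ k := Nat.pow_log_le_self b hk0.ne'
    have hkbm : k < b ^ (m+1) := Nat.lt_pow_succ_log_self (by omega) k
    have hkbnn : k < b ^ n := by omega
    have hmn : m + 1 ≤ n := Nat.log_lt_of_lt_pow hk0.ne' hkbnn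
    have hc : ((n - 1 - m : ℕ) : ℝ) = (n:ℝ) - 1 - (m:ℝ) := by
      rw [Nat.cast_sub (by omega), Nat.cast_sub (by exact_mod_cast hn)]
      push_cast; ring
    have hfl : ⌊Real.logb b k⌋ = (m:ℤ) := by
      rw [Int.floor_eq_iff]
      constructor
      · push_cast
        rw [Real.le_logb_iff_rpow_le hbR hkR, Real.rpow_natCast]
        exact_mod_cast hbm
      · push_cast
        rw [Real.logb_lt_iff_lt_rpow hbR hkR]
        have h1 : ((m:ℝ) + 1) = ((m + 1 : ℕ) : ℝ) := by push_cast; ring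
        rw [h1, Real.rpow_natCast]
        exact_mod_cast hkbm
    have hfr : Int.fract (Real.logb b k) = Real.logb b k - m := by
      rw [Int.fract, hfl]; push_cast; ring
    have hprod : (b:ℝ) ^ (t + (m:ℝ)) * ((b:ℝ) ^ (n - 1 - m : ℕ)) = (b:ℝ) ^ (t + (n:ℝ) - 1) := by
      rw [← Real.rpow_natCast (b:ℝ) (n - 1 - m), ← Real.rpow_add hbR0, hc]
      congr 1; ring
    have hBpos : (0:ℝ) < (b:ℝ) ^ (n - 1 - m : ℕ) := by positivity
    constructor
    · rintro ⟨-, hle⟩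
      rw [hfr] at hle
      have hk_le : (k:ℝ) ≤ (b:ℝ) ^ (t + (m:ℝ)) := by
        rw [← Real.logb_le_iff_le_rpow hbR hkR]
        linarith
      have : ((k * b ^ (n - 1 - m) : ℕ) : ℝ) < (i:ℝ) + 1 := by
        push_cast
        calc (k:ℝ) * (b:ℝ) ^ (n - 1 - m : ℕ) ≤ (b:ℝ) ^ (t + (m:ℝ)) * (b:ℝ) ^ (n - 1 - m : ℕ) := by
              exact mul_le_mul_of_nonneg_right hk_le hBpos.le
        _ = (b:ℝ) ^ (t + (n:ℝ) - 1) := hprod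
        _ < (i:ℝ) + 1 := hkey2
      have : k * b ^ (n - 1 - m) < i + 1 := by exact_mod_cast this
      omega
    · intro hle
      have hleR : (k:ℝ) * (b:ℝ) ^ (n - 1 - m : ℕ) ≤ (b:ℝ) ^ (t + (m:ℝ)) * (b:ℝ) ^ (n - 1 - m : ℕ) := by
        rw [hprod]
        calc (k:ℝ) * (b:ℝ) ^ (n - 1 - m : ℕ) ≤ (i:ℝ) := by exact_mod_cast hle
        _ ≤ (b:ℝ) ^ (t + (n:ℝ) - 1) := hkey1
      have hk_le : (k:ℝ) ≤ (b:ℝ) ^ (t + (m:ℝ)) := le_of_mul_le_mul_right hleR hBpos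
      have hlogle : Real.logb b k ≤ t + m := (Real.logb_le_iff_le_rpow hbR hkR).mpr hk_le
      exact ⟨Int.fract_nonneg _, by rw [hfr]; linarith⟩
  -- upper bound for the division
  have hub : ∀ m, m < n → i / b ^ (n - 1 - m) < b ^ (m+1) := by
    intro m hm
    rw [Nat.div_lt_iff_lt_mul (Nat.pow_pos hb0)]
    calc i < b ^ n := hibn
    _ = b ^ (m+1) * b ^ (n - 1 - m) := by rw [← pow_add]; congr 1; omega
  have hlb : ∀ m, m < n → b ^ m ≤ i / b ^ (n - 1 - m) := by
    intro m hm
    rw [Nat.le_div_iff_mul_le (Nat.pow_pos hb0)]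
    calc b ^ m * b ^ (n - 1 - m) = b ^ (n - 1) := by rw [← pow_add]; congr 1; omega
    _ ≤ i := hi1
  -- the filtered set as a disjoint union of blocks
  have hset : (Finset.Icc 1 N).filter (fun k => k * b ^ (n - 1 - Nat.log b k) ≤ i)
      = (Finset.range n).biUnion (fun m => Finset.Icc (b ^ m) (i / b ^ (n - 1 - m))) := by
    ext k
    simp only [Finset.mem_filter, Finset.mem_Icc, Finset.mem_biUnion, Finset.mem_range]
    constructor
    · rintro ⟨⟨hk1, hkN⟩, hP⟩
      have hkbnn : k < b ^ n := by omega
      refine ⟨Nat.log b k, Nat.log_lt_of_lt_pow (by omega) hkbnn,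
        Nat.pow_log_le_self b (by omega), ?_⟩
      rw [Nat.le_div_iff_mul_le (Nat.pow_pos hb0)]
      exact hP
    · rintro ⟨m, hmn, hbm, hkd⟩
      have hki : k ≤ i := le_trans hkd (Nat.div_le_self _ _)
      have hkub : k < b ^ (m+1) := lt_of_le_of_lt hkd (hub m hmn)
      have hk1 : 1 ≤ k := le_trans (Nat.one_le_pow _ _ hb0) hbm
      have hlog : Nat.log b k = m := Nat.log_eq_of_pow_le_of_lt_pow hbm hkub
      refine ⟨⟨hk1, by omega⟩, ?_⟩
      rw [hlog, ← Nat.le_div_iff_mul_le (Nat.pow_pos hb0)]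
      exact hkd
  -- disjointness
  have hdkey : ∀ x y, x < y → y < n →
      Disjoint (Finset.Icc (b^x) (i / b^(n-1-x))) (Finset.Icc (b^y) (i / b^(n-1-y))) := by
    intro x y hxy hyn
    rw [Finset.disjoint_left]
    intro k hkx hky
    rw [Finset.mem_Icc] at hkx hky
    have h1 : k < b ^ (x+1) := lt_of_le_of_lt hkx.2 (hub x (by omega))
    have h2 : b ^ (x+1) ≤ b ^ y := Nat.pow_le_pow_right (by omega) (by omega)
    omega
  have hdisj : ∀ x ∈ Finset.range n, ∀ y ∈ Finset.range n, x ≠ y →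
      Disjoint (Finset.Icc (b^x) (i / b^(n-1-x))) (Finset.Icc (b^y) (i / b^(n-1-y))) := by
    intro x hx y hy hxy
    rw [Finset.mem_range] at hx hy
    rcases lt_or_gt_of_ne hxy with h | h
    · exact hdkey x y h hy
    · exact (hdkey y x h hx).symm
  -- the cardinality
  have hcard : ((Finset.Icc 1 N).filter (fun k => k * b ^ (n - 1 - Nat.log b k) ≤ i)).card
      = ∑ j ∈ Finset.range n, (i / b ^ j + 1 - b ^ (n - 1 - j)) := by
    rw [hset, Finset.card_biUnion hdisj]
    rw [← Finset.sum_range_reflect (fun j => i / b ^ j + 1 - b ^ (n - 1 - j)) n]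
    refine Finset.sum_congr rfl ?_
    intro m hm
    rw [Finset.mem_range] at hm
    rw [Nat.card_Icc]
    have : n - 1 - (n - 1 - m) = m := by omega
    rw [this]
  -- measure computation
  have hL : empLog b N (Set.Icc 0 t)
      = (N : ENNReal)⁻¹ * ((Finset.Icc 1 N).filter
          (fun k : ℕ => Int.fract (Real.logb b (k:ℝ)) ∈ Set.Icc 0 t)).card := by
    rw [empLog, Measure.smul_apply, Measure.finset_sum_apply, smul_eq_mul]
    congr 1
    calc ∑ k ∈ Finset.Icc 1 N, Measure.dirac (Int.fract (Real.logb b k)) (Set.Icc 0 t)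
        = ∑ k ∈ Finset.Icc 1 N,
            (if Int.fract (Real.logb b k) ∈ Set.Icc 0 t then (1:ENNReal) else 0) := by
          refine Finset.sum_congr rfl fun k _ => ?_
          rw [Measure.dirac_apply' _ measurableSet_Icc, Set.indicator_apply]
          simp
    _ = ((Finset.Icc 1 N).filter (fun k : ℕ => Int.fract (Real.logb b (k:ℝ)) ∈ Set.Icc 0 t)).card := by
          rw [Finset.sum_boole]
  rw [hL]
  have hfc : (Finset.Icc 1 N).filter (fun k : ℕ => Int.fract (Real.logb b (k:ℝ)) ∈ Set.Icc 0 t)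
      = (Finset.Icc 1 N).filter (fun k => k * b ^ (n - 1 - Nat.log b k) ≤ i) := by
    ext k
    simp only [Finset.mem_filter]
    exact and_congr_right fun hk => hmem k hk
  rw [hfc, hcard]
  -- the right-hand side
  set C : ℕ := ∑ j ∈ Finset.range n, (i / b ^ j + 1 - b ^ (n - 1 - j)) with hC
  have hterm : ∀ j ∈ Finset.range n, ((i / b ^ j + 1 - b ^ (n - 1 - j) : ℕ) : ℝ)
      = (((i / b ^ j : ℕ) : ℝ) - ((b ^ (n - 1 - j) : ℕ) : ℝ)) + 1 := by
    intro j hj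
    rw [Finset.mem_range] at hj
    have h : b ^ (n - 1 - j) ≤ i / b ^ j := by
      rw [Nat.le_div_iff_mul_le (Nat.pow_pos hb0)]
      calc b ^ (n - 1 - j) * b ^ j = b ^ (n - 1) := by rw [← pow_add]; congr 1; omega
      _ ≤ i := hi1
    rw [Nat.cast_sub (by omega)]
    push_cast
    ring
  have hRHS : (n : ℝ) + ∑ j ∈ Finset.range n,
      (((i / b ^ j : ℕ) : ℝ) - ((b ^ (n - 1 - j) : ℕ) : ℝ)) = (C : ℝ) := by
    rw [hC, Nat.cast_sum, Finset.sum_congr rfl hterm, Finset.sum_add_distrib,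
      Finset.sum_const, Finset.card_range, nsmul_eq_mul, mul_one]
    ring
  rw [hRHS]
  rw [ENNReal.ofReal_div_of_pos (by exact_mod_cast hN0), ENNReal.ofReal_natCast,
    ENNReal.ofReal_natCast, div_eq_mul_inv, mul_comm]
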